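/- Let φ_Nij(x, y) = ⌊x⌋⌊y⌋ − ⌊⌊x⌋y⌋ − ⌊x⌊y⌋⌋ + ⌊⌊xy⌋⌋ (the Nijenhuis OPI). For any u, v, w ∈ 𝔐(Z) ∖ {1}, with B(x,y) = ⌊x⌋y + x⌊y⌋ − ⌊xy⌋, the element B(B(u,v), w) − B(u, B(v,w)) rewrites to 0 under the rewriting system Π = {⌊a⌋⌊b⌋ → ⌊B(a,b)⌋ : a, b ∈ 𝔐(Z)} on k𝔐(Z); i.e., φ_Nij is of Rota–Baxter type. -/

import Mathlib

namespace OpAlg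

/-- Letters of the free operated monoid `𝔐(Z)`: a letter is either a variable from `Z`
or a bracketed word `⌊w⌋`. -/
inductive OpLetter (Z : Type u) : Type u
  | var : Z → OpLetter Z
  | floor : List (OpLetter Z) → OpLetter Z

/-- The free operated monoid `𝔐(Z)` on a set `Z`: words in variables and brackets. -/
def OpMonoid (Z : Type u) : Type u := FreeMonoid (OpLetter Z)

instance {Z : Type u} : Monoid (OpMonoid Z) :=
  inferInstanceAs (Monoid (FreeMonoid (OpLetter Z)))

/-- The variable `z` as an element of `𝔐(Z)`. -/
def OpMonoid.ofVar {Z : Type u} (z : Z) : OpMonoid Z := FreeMonoid.of (OpLetter.var z)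

/-- The bracket operation `u ↦ ⌊u⌋` on `𝔐(Z)`. -/
def OpMonoid.flr {Z : Type u} (u : OpMonoid Z) : OpMonoid Z :=
  FreeMonoid.of (OpLetter.floor (FreeMonoid.toList u))

/-- The breadth of `u ∈ 𝔐(Z)`. -/
def OpMonoid.breadth {Z : Type u} (u : OpMonoid Z) : ℕ := (FreeMonoid.toList u).length

variable {X B : Type*} [Monoid B]

mutual
  /-- Evaluation of a letter in a monoid `B` with an operator `P`, sending the
  variable `x` to `σ x`. -/
  def evalLetter (σ : X → B) (P : B → B) : OpLetter X → B
    | .var x => σ x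
    | .floor w => P (evalList σ P w)
  /-- Evaluation of a list of letters (product of the letter evaluations). -/
  def evalList (σ : X → B) (P : B → B) : List (OpLetter X) → B
    | [] => 1
    | a :: w => evalLetter σ P a * evalList σ P w
end

/-- Evaluation of a word `w ∈ 𝔐(X)` in a monoid `B` with operator `P` at `σ : X → B`. -/
def evalWord (σ : X → B) (P : B → B) (w : OpMonoid X) : B :=
  evalList σ P (FreeMonoid.toList w)

/-- Monoid-level substitution `𝔐(X) → 𝔐(Z)`, `xᵢ ↦ σ xᵢ`. -/
def substW {X Z : Type*} (σ : X → OpMonoid Z) : OpMonoid X → OpMonoid Z :=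
  evalWord σ OpMonoid.flr

/-- The free unital operated algebra `k𝔐(Z)` (as a `k`-module: the monoid algebra). -/
abbrev kOpM (k : Type*) [Field k] (Z : Type*) := MonoidAlgebra k (OpMonoid Z)

/-- The operator `P` on `k𝔐(Z)`: linear extension of `u ↦ ⌊u⌋`. -/
noncomputable def opP (k : Type*) [Field k] {Z : Type*} (f : kOpM k Z) : kOpM k Z :=
  MonoidAlgebra.ofCoeff (Finsupp.mapDomain OpMonoid.flr f.coeff)

/-- Evaluation of `φ ∈ k𝔐(X)` in a `k`-algebra `B` with operator `P` at `σ : X → B`: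
`φ(σ x₁, …, σ xₙ)`. -/
noncomputable def evalPoly (k : Type*) [Field k] {X B : Type*} [Semiring B] [Module k B]
    (σ : X → B) (P : B → B) (φ : MonoidAlgebra k (OpMonoid X)) : B :=
  φ.coeff.sum fun w c => c • evalWord σ P w

/-- A context `q ∈ 𝔐⋆(Z)` : a word in `𝔐(Z ∪ {⋆})` with exactly one occurrence of `⋆`. -/
inductive OpCtx (Z : Type u) : Type u
  | hole (u v : OpMonoid Z)
  | floor (u : OpMonoid Z) (q : OpCtx Z) (v : OpMonoid Z)

/-- Substitution `q|_w` of a word `w` for `⋆` in a context `q`. -/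
def OpCtx.subst {Z : Type u} : OpCtx Z → OpMonoid Z → OpMonoid Z
  | .hole u v, w => u * w * v
  | .floor u q v, w => u * OpMonoid.flr (q.subst w) * v

/-- Substitution `q|_f` of a polynomial `f ∈ k𝔐(Z)` for `⋆` in a context `q`. -/
noncomputable def ctxPoly (k : Type*) [Field k] {Z : Type*} (q : OpCtx Z) (f : kOpM k Z) :
    kOpM k Z :=
  MonoidAlgebra.ofCoeff (Finsupp.mapDomain q.subst f.coeff)

/-- The leading monomial of an element of a monoid algebra (the monomial `1` if the
element is a scalar or zero). -/
noncomputable def lm {k : Type*} [Field k] {G : Type*} [Monoid G] [LinearOrder G]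
    (f : MonoidAlgebra k G) : G :=
  if h : f.coeff.support.Nonempty then f.coeff.support.max' h else 1

/-- Division of an element by its leading coefficient. -/
noncomputable def monicize {k : Type*} [Field k] {G : Type*} [Monoid G] [LinearOrder G]
    (f : MonoidAlgebra k G) : MonoidAlgebra k G :=
  (f.coeff (lm f))⁻¹ • f

section GS
variable (k : Type*) [Field k] {Z : Type*} [LinearOrder (OpMonoid Z)]

/-- `f` is trivial modulo `(𝒢, w)` : `f = Σᵢ cᵢ qᵢ|_{sᵢ}` with `qᵢ|_{s̄ᵢ} < w`, `sᵢ ∈ 𝒢`. -/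
def TrivialMod (𝒢 : Set (kOpM k Z)) (w : OpMonoid Z) (f : kOpM k Z) : Prop :=
  f ∈ Submodule.span k
    {g : kOpM k Z | ∃ s ∈ 𝒢, ∃ q : OpCtx Z, g = ctxPoly k q s ∧ q.subst (lm s) < w}

/-- `𝒢 ⊆ k𝔐(Z)` is an operated Gröbner–Shirshov basis: all intersection compositions and
all inclusion compositions of (monicized) pairs of elements of `𝒢` are trivial. -/
def IsOpGS (𝒢 : Set (kOpM k Z)) : Prop :=
  (∀ f ∈ 𝒢, ∀ g ∈ 𝒢, ∀ u v w : OpMonoid Z,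
      w = lm f * u → w = v * lm g →
      max (OpMonoid.breadth (lm f)) (OpMonoid.breadth (lm g)) < OpMonoid.breadth w →
      OpMonoid.breadth w < OpMonoid.breadth (lm f) + OpMonoid.breadth (lm g) →
      TrivialMod k 𝒢 w
        (monicize f * MonoidAlgebra.single u 1 - MonoidAlgebra.single v 1 * monicize g)) ∧
  (∀ f ∈ 𝒢, ∀ g ∈ 𝒢, ∀ q : OpCtx Z, ∀ w : OpMonoid Z,
      w = lm f → w = q.subst (lm g) →
      TrivialMod k 𝒢 w (monicize f - ctxPoly k q (monicize g)))

end GS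

section Assoc
variable (k : Type*) [Field k] {Z : Type*} [LinearOrder (FreeMonoid Z)]

/-- The free unital algebra `kM(Z)` (noncommutative polynomials). -/
abbrev kM (k : Type*) [Field k] (Z : Type*) := MonoidAlgebra k (FreeMonoid Z)

/-- Triviality modulo `(G, w)` in the classical associative sense. -/
def ATrivialMod (G : Set (kM k Z)) (w : FreeMonoid Z) (f : kM k Z) : Prop :=
  f ∈ Submodule.span k
    {g : kM k Z | ∃ s ∈ G, ∃ u v : FreeMonoid Z,
      g = MonoidAlgebra.single u 1 * s * MonoidAlgebra.single v 1 ∧ u * lm s * v < w}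

/-- `G ⊆ kM(Z)` is a Gröbner–Shirshov basis in the classical associative sense. -/
def IsAssocGS (G : Set (kM k Z)) : Prop :=
  (∀ f ∈ G, ∀ g ∈ G, ∀ u v w : FreeMonoid Z,
      w = lm f * u → w = v * lm g →
      max (FreeMonoid.toList (lm f)).length (FreeMonoid.toList (lm g)).length <
        (FreeMonoid.toList w).length →
      (FreeMonoid.toList w).length <
        (FreeMonoid.toList (lm f)).length + (FreeMonoid.toList (lm g)).length →
      ATrivialMod k G w
        (monicize f * MonoidAlgebra.single u 1 - MonoidAlgebra.single v 1 * monicize g)) ∧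
  (∀ f ∈ G, ∀ g ∈ G, ∀ u v w : FreeMonoid Z,
      w = lm f → w = u * lm g * v →
      ATrivialMod k G w
        (monicize f -
          MonoidAlgebra.single u 1 * monicize g * MonoidAlgebra.single v 1))

end Assoc

/-- The embedding of the free monoid `M(Z)` into the free operated monoid `𝔐(Z)`. -/
def embW {Z : Type*} (w : FreeMonoid Z) : OpMonoid Z :=
  (FreeMonoid.map (OpLetter.var) w : FreeMonoid (OpLetter Z))

/-- The embedding `kM(Z) → k𝔐(Z)`. -/
noncomputable def embA (k : Type*) [Field k] {Z : Type*} (f : kM k Z) : kOpM k Z :=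
  MonoidAlgebra.ofCoeff (Finsupp.mapDomain embW f.coeff)

end OpAlg

namespace OpAlg

variable (k : Type*) [Field k] {Z : Type*}

/-- The bilinear map `B(x, y) = x⌊y⌋ + ⌊x⌋y − ⌊xy⌋` of the Nijenhuis OPI
`φ_Nij = ⌊x⌋⌊y⌋ − ⌊B(x, y)⌋`, extended to `k𝔐(Z)`. -/
noncomputable def nijB (f g : kOpM k Z) : kOpM k Z :=
  f * opP k g + opP k f * g - opP k (f * g)

/-- One-step rewriting with respect to the term-rewriting system
`Π = {⌊a⌋⌊b⌋ → ⌊B(a, b)⌋ : a, b ∈ 𝔐(Z)}` on `k𝔐(Z)`: an occurrence of a monomial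
`q|_{⌊a⌋⌊b⌋}` in the support is replaced (with its coefficient) by `q|_{⌊B(a,b)⌋}`. -/
noncomputable def nijStep (f g : kOpM k Z) : Prop :=
  ∃ (a b : OpMonoid Z) (q : OpCtx Z),
    f.coeff (q.subst (OpMonoid.flr a * OpMonoid.flr b)) ≠ 0 ∧
    g = f
      - MonoidAlgebra.single (q.subst (OpMonoid.flr a * OpMonoid.flr b))
          (f.coeff (q.subst (OpMonoid.flr a * OpMonoid.flr b)))
      + f.coeff (q.subst (OpMonoid.flr a * OpMonoid.flr b)) •
          ctxPoly k q (opP k (nijB k (MonoidAlgebra.single a 1) (MonoidAlgebra.single b 1)))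

end OpAlg


namespace OpAlg

section AuxLemmas

variable (k : Type*) [Field k] {Z : Type*}

theorem opP_single (a : OpMonoid Z) (c : k) :
    opP k (MonoidAlgebra.single a c) = MonoidAlgebra.single (OpMonoid.flr a) c := by
  simp only [opP, MonoidAlgebra.coeff_single, Finsupp.mapDomain_single, MonoidAlgebra.ofCoeff_single]

theorem opP_add (f g : kOpM k Z) : opP k (f + g) = opP k f + opP k g := by
  simp only [opP, MonoidAlgebra.coeff_add, Finsupp.mapDomain_add, MonoidAlgebra.ofCoeff_add]

theorem opP_sub (f g : kOpM k Z) : opP k (f - g) = opP k f - opP k g := by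
  rw [eq_sub_iff_add_eq, ← opP_add]; congr 1; abel

theorem ctxPoly_single (q : OpCtx Z) (a : OpMonoid Z) (c : k) :
    ctxPoly k q (MonoidAlgebra.single a c) = MonoidAlgebra.single (q.subst a) c := by
  simp only [ctxPoly, MonoidAlgebra.coeff_single, Finsupp.mapDomain_single, MonoidAlgebra.ofCoeff_single]

theorem ctxPoly_add (q : OpCtx Z) (f g : kOpM k Z) :
    ctxPoly k q (f + g) = ctxPoly k q f + ctxPoly k q g := by
  simp only [ctxPoly, MonoidAlgebra.coeff_add, Finsupp.mapDomain_add, MonoidAlgebra.ofCoeff_add]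

theorem ctxPoly_sub (q : OpCtx Z) (f g : kOpM k Z) :
    ctxPoly k q (f - g) = ctxPoly k q f - ctxPoly k q g := by
  rw [eq_sub_iff_add_eq, ← ctxPoly_add]; congr 1; abel

theorem nijB_add_left (f g h : kOpM k Z) :
    nijB k (f + g) h = nijB k f h + nijB k g h := by
  simp only [nijB, add_mul, mul_add, opP_add]; abel

theorem nijB_sub_left (f g h : kOpM k Z) :
    nijB k (f - g) h = nijB k f h - nijB k g h := by
  simp only [nijB, sub_mul, mul_sub, opP_sub]; abel

theorem nijB_add_right (f g h : kOpM k Z) :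
    nijB k f (g + h) = nijB k f g + nijB k f h := by
  simp only [nijB, add_mul, mul_add, opP_add]; abel

theorem nijB_sub_right (f g h : kOpM k Z) :
    nijB k f (g - h) = nijB k f g - nijB k f h := by
  simp only [nijB, sub_mul, mul_sub, opP_sub]; abel

theorem nijB_single (a b : OpMonoid Z) :
    nijB k (MonoidAlgebra.single a 1) (MonoidAlgebra.single b 1) =
      MonoidAlgebra.single (a * OpMonoid.flr b) (1 : k)
        + MonoidAlgebra.single (OpMonoid.flr a * b) 1
        - MonoidAlgebra.single (OpMonoid.flr (a * b)) 1 := by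
  simp only [nijB, opP_single, MonoidAlgebra.single_mul_single, one_mul]

theorem kop_add_apply (f g : kOpM k Z) (t : OpMonoid Z) : (f + g).coeff t = f.coeff t + g.coeff t :=
  Finsupp.add_apply f.coeff g.coeff t

theorem kop_sub_apply (f g : kOpM k Z) (t : OpMonoid Z) : (f - g).coeff t = f.coeff t - g.coeff t :=
  Finsupp.sub_apply f.coeff g.coeff t

theorem ctx_opP_nijB (q : OpCtx Z) (a b : OpMonoid Z) :
    ctxPoly k q (opP k (nijB k (MonoidAlgebra.single a 1) (MonoidAlgebra.single b 1))) =
      MonoidAlgebra.single (q.subst (OpMonoid.flr (a * OpMonoid.flr b))) (1 : k)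
        + MonoidAlgebra.single (q.subst (OpMonoid.flr (OpMonoid.flr a * b))) 1
        - MonoidAlgebra.single (q.subst (OpMonoid.flr (OpMonoid.flr (a * b)))) 1 := by
  rw [nijB_single, opP_sub, opP_add, opP_single, opP_single, opP_single,
    ctxPoly_sub, ctxPoly_add, ctxPoly_single, ctxPoly_single, ctxPoly_single]

/-- Expansion of the Nijenhuis associator on monomials. -/
theorem nijB_assoc_expand (u v w : OpMonoid Z) :
    nijB k (nijB k (MonoidAlgebra.single u 1) (MonoidAlgebra.single v 1))
          (MonoidAlgebra.single w 1)
        - nijB k (MonoidAlgebra.single u 1)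
            (nijB k (MonoidAlgebra.single v 1) (MonoidAlgebra.single w 1)) =
      MonoidAlgebra.single (u * (OpMonoid.flr v * OpMonoid.flr w)) (1 : k)
        + MonoidAlgebra.single (OpMonoid.flr (u * OpMonoid.flr v) * w) 1
        + MonoidAlgebra.single (OpMonoid.flr (OpMonoid.flr u * v) * w) 1
        - MonoidAlgebra.single (OpMonoid.flr (OpMonoid.flr u * (v * w))) 1
        - MonoidAlgebra.single (OpMonoid.flr (u * v) * OpMonoid.flr w) 1
        - MonoidAlgebra.single (OpMonoid.flr (OpMonoid.flr (u * v)) * w) 1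
        + MonoidAlgebra.single (OpMonoid.flr (OpMonoid.flr (u * v) * w)) 1
        - MonoidAlgebra.single (u * OpMonoid.flr (v * OpMonoid.flr w)) 1
        + MonoidAlgebra.single (OpMonoid.flr (u * (v * OpMonoid.flr w))) 1
        - MonoidAlgebra.single (u * OpMonoid.flr (OpMonoid.flr v * w)) 1
        - MonoidAlgebra.single (OpMonoid.flr u * (OpMonoid.flr v * w)) 1
        + MonoidAlgebra.single (u * OpMonoid.flr (OpMonoid.flr (v * w))) 1
        + MonoidAlgebra.single (OpMonoid.flr u * OpMonoid.flr (v * w)) 1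
        - MonoidAlgebra.single (OpMonoid.flr (u * OpMonoid.flr (v * w))) 1 := by
  simp only [nijB_single, nijB_sub_left, nijB_add_left, nijB_sub_right, nijB_add_right,
    mul_assoc]
  abel

end AuxLemmas

section ListLemmas

variable {Z : Type*}

theorem toList_flr (x : OpMonoid Z) :
    FreeMonoid.toList (OpMonoid.flr x) = [OpLetter.floor (FreeMonoid.toList x)] := rfl

theorem toList_mul' (x y : OpMonoid Z) :
    FreeMonoid.toList (x * y) = FreeMonoid.toList x ++ FreeMonoid.toList y := rfl

theorem op_ne_of_list {x y : OpMonoid Z}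
    (h : FreeMonoid.toList x ≠ FreeMonoid.toList y) : x ≠ y :=
  fun e => h (congrArg _ e)

theorem sizeOf_append_eq (V W : List (OpLetter Z)) :
    sizeOf (V ++ W) + 1 = sizeOf V + sizeOf W := by
  induction V with
  | nil => simp only [List.nil_append, List.nil.sizeOf_spec]; omega
  | cons a l ih => simp only [List.cons_append, List.cons.sizeOf_spec]; omega

theorem one_le_list_sizeOf (V : List (OpLetter Z)) : 1 ≤ sizeOf V := by
  cases V with
  | nil => simp
  | cons a l => simp; omega

theorem floor_not_mem {L W : List (OpLetter Z)} (hle : sizeOf W ≤ sizeOf L) :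
    OpLetter.floor L ∉ W := by
  intro hm
  have h1 := List.sizeOf_lt_of_mem hm
  have h2 : sizeOf (OpLetter.floor L) = 1 + sizeOf L := by simp
  omega

theorem floor_cons_ne (a : OpLetter Z) (U' : List (OpLetter Z)) :
    OpLetter.floor (a :: U') ≠ a := by
  intro h
  have := congrArg SizeOf.sizeOf h
  simp only [OpLetter.floor.sizeOf_spec, List.cons.sizeOf_spec] at this
  omega

theorem ne_cons_floor_self (U V : List (OpLetter Z)) :
    U ≠ OpLetter.floor U :: V := by
  intro h
  have := congrArg SizeOf.sizeOf h
  simp only [OpLetter.floor.sizeOf_spec, List.cons.sizeOf_spec] at this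
  omega

theorem ne_singleton_floor_append (U V : List (OpLetter Z)) :
    U ≠ [OpLetter.floor (U ++ V)] := by
  intro h
  have := congrArg SizeOf.sizeOf h
  have h2 := sizeOf_append_eq U V
  have h3 := one_le_list_sizeOf V
  simp only [OpLetter.floor.sizeOf_spec, List.cons.sizeOf_spec, List.nil.sizeOf_spec] at this
  omega

end ListLemmas

end OpAlg

open OpAlg in
/-- For the Nijenhuis OPI `φ_Nij = ⌊x⌋⌊y⌋ − ⌊B(x,y)⌋` with
`B(x, y) = ⌊x⌋y + x⌊y⌋ − ⌊xy⌋`, for all `u, v, w ∈ 𝔐(Z) ∖ {1}` the element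
`B(B(u,v), w) − B(u, B(v,w))` rewrites to `0` under the rewriting system
`Π = {⌊a⌋⌊b⌋ → ⌊B(a,b)⌋}` on `k𝔐(Z)`; i.e. `φ_Nij` is of Rota–Baxter type. -/
theorem nijenhuis_rota_baxter_type
    (k : Type*) [Field k] (Z : Type*) (u v w : OpMonoid Z)
    (hu : u ≠ 1) (hv : v ≠ 1) (hw : w ≠ 1) :
    Relation.ReflTransGen (nijStep k)
      (nijB k (nijB k (MonoidAlgebra.single u 1) (MonoidAlgebra.single v 1))
          (MonoidAlgebra.single w 1)
        - nijB k (MonoidAlgebra.single u 1)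
            (nijB k (MonoidAlgebra.single v 1) (MonoidAlgebra.single w 1)))
      0 := by
  
  classical
  have hUne : FreeMonoid.toList u ≠ [] := fun h => hu (FreeMonoid.toList.injective h)
  have hVne : FreeMonoid.toList v ≠ [] := fun h => hv (FreeMonoid.toList.injective h)
  have hWne : FreeMonoid.toList w ≠ [] := fun h => hw (FreeMonoid.toList.injective h)
  have hUpos : 0 < (FreeMonoid.toList u).length := List.length_pos_iff.mpr hUne
  have hVpos : 0 < (FreeMonoid.toList v).length := List.length_pos_iff.mpr hVne
  have hWpos : 0 < (FreeMonoid.toList w).length := List.length_pos_iff.mpr hWne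
  have ne1_1 : (u * (OpMonoid.flr v * OpMonoid.flr w)) ≠ (OpMonoid.flr u * OpMonoid.flr (v * w)) := by
    refine op_ne_of_list ?_
    simp only [toList_mul', toList_flr, List.cons_append, List.nil_append,
      List.append_assoc]
    intro h
    have hl := congrArg List.length h
    simp only [List.length_append, List.length_cons, List.length_nil] at hl
    omega
  have ne1_2 : (OpMonoid.flr (u * OpMonoid.flr v) * w) ≠ (OpMonoid.flr u * OpMonoid.flr (v * w)) := by
    refine op_ne_of_list ?_
    simp only [toList_mul', toList_flr, List.cons_append, List.nil_append,
      List.append_assoc]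
    intro h
    replace h := h.symm
    injection h with h1 h2
    injection h1 with h3
    rw [List.self_eq_append_right] at h3
    exact List.cons_ne_nil _ _ h3
  have ne1_3 : (OpMonoid.flr (OpMonoid.flr u * v) * w) ≠ (OpMonoid.flr u * OpMonoid.flr (v * w)) := by
    refine op_ne_of_list ?_
    simp only [toList_mul', toList_flr, List.cons_append, List.nil_append,
      List.append_assoc]
    intro h
    replace h := h.symm
    injection h with h1 h2
    injection h1 with h3
    exact ne_cons_floor_self _ _ h3
  have ne1_4 : (OpMonoid.flr (OpMonoid.flr u * (v * w))) ≠ (OpMonoid.flr u * OpMonoid.flr (v * w)) := by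
    refine op_ne_of_list ?_
    simp only [toList_mul', toList_flr, List.cons_append, List.nil_append,
      List.append_assoc]
    intro h
    simp at h
  have ne1_5 : (OpMonoid.flr (u * v) * OpMonoid.flr w) ≠ (OpMonoid.flr u * OpMonoid.flr (v * w)) := by
    refine op_ne_of_list ?_
    simp only [toList_mul', toList_flr, List.cons_append, List.nil_append,
      List.append_assoc]
    intro h
    replace h := h.symm
    injection h with h1 h2
    injection h1 with h3
    rw [List.self_eq_append_right] at h3
    exact hVne h3
  have ne1_6 : (OpMonoid.flr (OpMonoid.flr (u * v)) * w) ≠ (OpMonoid.flr u * OpMonoid.flr (v * w)) := by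
    refine op_ne_of_list ?_
    simp only [toList_mul', toList_flr, List.cons_append, List.nil_append,
      List.append_assoc]
    intro h
    replace h := h.symm
    injection h with h1 h2
    injection h1 with h3
    exact ne_singleton_floor_append _ _ h3
  have ne1_7 : (OpMonoid.flr (OpMonoid.flr (u * v) * w)) ≠ (OpMonoid.flr u * OpMonoid.flr (v * w)) := by
    refine op_ne_of_list ?_
    simp only [toList_mul', toList_flr, List.cons_append, List.nil_append,
      List.append_assoc]
    intro h
    simp at h
  have ne1_8 : (u * OpMonoid.flr (v * OpMonoid.flr w)) ≠ (OpMonoid.flr u * OpMonoid.flr (v * w)) := by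
    refine op_ne_of_list ?_
    simp only [toList_mul', toList_flr, List.cons_append, List.nil_append,
      List.append_assoc]
    intro h
    replace h := h.symm
    obtain ⟨a, U', hUc⟩ := List.exists_cons_of_ne_nil hUne
    rw [hUc, List.cons_append] at h
    injection h with h1 h2
    exact floor_cons_ne a U' h1
  have ne1_9 : (OpMonoid.flr (u * (v * OpMonoid.flr w))) ≠ (OpMonoid.flr u * OpMonoid.flr (v * w)) := by
    refine op_ne_of_list ?_
    simp only [toList_mul', toList_flr, List.cons_append, List.nil_append,
      List.append_assoc]
    intro h
    simp at h
  have ne1_10 : (u * OpMonoid.flr (OpMonoid.flr v * w)) ≠ (OpMonoid.flr u * OpMonoid.flr (v * w)) := by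
    refine op_ne_of_list ?_
    simp only [toList_mul', toList_flr, List.cons_append, List.nil_append,
      List.append_assoc]
    intro h
    replace h := h.symm
    obtain ⟨a, U', hUc⟩ := List.exists_cons_of_ne_nil hUne
    rw [hUc, List.cons_append] at h
    injection h with h1 h2
    exact floor_cons_ne a U' h1
  have ne1_11 : (OpMonoid.flr u * (OpMonoid.flr v * w)) ≠ (OpMonoid.flr u * OpMonoid.flr (v * w)) := by
    refine op_ne_of_list ?_
    simp only [toList_mul', toList_flr, List.cons_append, List.nil_append,
      List.append_assoc]
    intro h
    have hl := congrArg List.length h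
    simp only [List.length_append, List.length_cons, List.length_nil] at hl
    omega
  have ne1_12 : (u * OpMonoid.flr (OpMonoid.flr (v * w))) ≠ (OpMonoid.flr u * OpMonoid.flr (v * w)) := by
    refine op_ne_of_list ?_
    simp only [toList_mul', toList_flr, List.cons_append, List.nil_append,
      List.append_assoc]
    intro h
    replace h := h.symm
    obtain ⟨a, U', hUc⟩ := List.exists_cons_of_ne_nil hUne
    rw [hUc, List.cons_append] at h
    injection h with h1 h2
    exact floor_cons_ne a U' h1
  have ne1_14 : (OpMonoid.flr (u * OpMonoid.flr (v * w))) ≠ (OpMonoid.flr u * OpMonoid.flr (v * w)) := by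
    refine op_ne_of_list ?_
    simp only [toList_mul', toList_flr, List.cons_append, List.nil_append,
      List.append_assoc]
    intro h
    simp at h
  have ne2_1 : (u * (OpMonoid.flr v * OpMonoid.flr w)) ≠ (OpMonoid.flr u * (OpMonoid.flr v * w)) := by
    refine op_ne_of_list ?_
    simp only [toList_mul', toList_flr, List.cons_append, List.nil_append,
      List.append_assoc]
    intro h
    replace h := h.symm
    obtain ⟨a, U', hUc⟩ := List.exists_cons_of_ne_nil hUne
    rw [hUc, List.cons_append] at h
    injection h with h1 h2
    exact floor_cons_ne a U' h1
  have ne2_2 : (OpMonoid.flr (u * OpMonoid.flr v) * w) ≠ (OpMonoid.flr u * (OpMonoid.flr v * w)) := by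
    refine op_ne_of_list ?_
    simp only [toList_mul', toList_flr, List.cons_append, List.nil_append,
      List.append_assoc]
    intro h
    replace h := h.symm
    injection h with h1 h2
    injection h1 with h3
    rw [List.self_eq_append_right] at h3
    exact List.cons_ne_nil _ _ h3
  have ne2_3 : (OpMonoid.flr (OpMonoid.flr u * v) * w) ≠ (OpMonoid.flr u * (OpMonoid.flr v * w)) := by
    refine op_ne_of_list ?_
    simp only [toList_mul', toList_flr, List.cons_append, List.nil_append,
      List.append_assoc]
    intro h
    replace h := h.symm
    injection h with h1 h2
    injection h1 with h3
    exact ne_cons_floor_self _ _ h3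
  have ne2_5 : (OpMonoid.flr (u * v) * OpMonoid.flr w) ≠ (OpMonoid.flr u * (OpMonoid.flr v * w)) := by
    refine op_ne_of_list ?_
    simp only [toList_mul', toList_flr, List.cons_append, List.nil_append,
      List.append_assoc]
    intro h
    replace h := h.symm
    injection h with h1 h2
    injection h1 with h3
    rw [List.self_eq_append_right] at h3
    exact hVne h3
  have ne2_6 : (OpMonoid.flr (OpMonoid.flr (u * v)) * w) ≠ (OpMonoid.flr u * (OpMonoid.flr v * w)) := by
    refine op_ne_of_list ?_
    simp only [toList_mul', toList_flr, List.cons_append, List.nil_append,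
      List.append_assoc]
    intro h
    replace h := h.symm
    injection h with h1 h2
    injection h1 with h3
    exact ne_singleton_floor_append _ _ h3
  have ne2_7 : (OpMonoid.flr (OpMonoid.flr (u * v) * w)) ≠ (OpMonoid.flr u * (OpMonoid.flr v * w)) := by
    refine op_ne_of_list ?_
    simp only [toList_mul', toList_flr, List.cons_append, List.nil_append,
      List.append_assoc]
    intro h
    have hl := congrArg List.length h
    simp only [List.length_append, List.length_cons, List.length_nil] at hl
    omega
  have ne2_8 : (u * OpMonoid.flr (v * OpMonoid.flr w)) ≠ (OpMonoid.flr u * (OpMonoid.flr v * w)) := by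
    refine op_ne_of_list ?_
    simp only [toList_mul', toList_flr, List.cons_append, List.nil_append,
      List.append_assoc]
    intro h
    replace h := h.symm
    obtain ⟨a, U', hUc⟩ := List.exists_cons_of_ne_nil hUne
    rw [hUc, List.cons_append] at h
    injection h with h1 h2
    exact floor_cons_ne a U' h1
  have ne2_9 : (OpMonoid.flr (u * (v * OpMonoid.flr w))) ≠ (OpMonoid.flr u * (OpMonoid.flr v * w)) := by
    refine op_ne_of_list ?_
    simp only [toList_mul', toList_flr, List.cons_append, List.nil_append,
      List.append_assoc]
    intro h
    have hl := congrArg List.length h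
    simp only [List.length_append, List.length_cons, List.length_nil] at hl
    omega
  have ne2_10 : (u * OpMonoid.flr (OpMonoid.flr v * w)) ≠ (OpMonoid.flr u * (OpMonoid.flr v * w)) := by
    refine op_ne_of_list ?_
    simp only [toList_mul', toList_flr, List.cons_append, List.nil_append,
      List.append_assoc]
    intro h
    replace h := h.symm
    obtain ⟨a, U', hUc⟩ := List.exists_cons_of_ne_nil hUne
    rw [hUc, List.cons_append] at h
    injection h with h1 h2
    exact floor_cons_ne a U' h1
  have ne2_12 : (u * OpMonoid.flr (OpMonoid.flr (v * w))) ≠ (OpMonoid.flr u * (OpMonoid.flr v * w)) := by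
    refine op_ne_of_list ?_
    simp only [toList_mul', toList_flr, List.cons_append, List.nil_append,
      List.append_assoc]
    intro h
    replace h := h.symm
    obtain ⟨a, U', hUc⟩ := List.exists_cons_of_ne_nil hUne
    rw [hUc, List.cons_append] at h
    injection h with h1 h2
    exact floor_cons_ne a U' h1
  have ne2_15 : (OpMonoid.flr (OpMonoid.flr (u * (v * w)))) ≠ (OpMonoid.flr u * (OpMonoid.flr v * w)) := by
    refine op_ne_of_list ?_
    simp only [toList_mul', toList_flr, List.cons_append, List.nil_append,
      List.append_assoc]
    intro h
    have hl := congrArg List.length h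
    simp only [List.length_append, List.length_cons, List.length_nil] at hl
    omega
  have ne3_1 : (u * (OpMonoid.flr v * OpMonoid.flr w)) ≠ (OpMonoid.flr (u * v) * OpMonoid.flr w) := by
    refine op_ne_of_list ?_
    simp only [toList_mul', toList_flr, List.cons_append, List.nil_append,
      List.append_assoc]
    intro h
    have hl := congrArg List.length h
    simp only [List.length_append, List.length_cons, List.length_nil] at hl
    omega
  have ne3_7 : (OpMonoid.flr (OpMonoid.flr (u * v) * w)) ≠ (OpMonoid.flr (u * v) * OpMonoid.flr w) := by
    refine op_ne_of_list ?_
    simp only [toList_mul', toList_flr, List.cons_append, List.nil_append,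
      List.append_assoc]
    intro h
    simp at h
  have ne3_8 : (u * OpMonoid.flr (v * OpMonoid.flr w)) ≠ (OpMonoid.flr (u * v) * OpMonoid.flr w) := by
    refine op_ne_of_list ?_
    simp only [toList_mul', toList_flr, List.cons_append, List.nil_append,
      List.append_assoc]
    intro h
    replace h := h.symm
    obtain ⟨a, U', hUc⟩ := List.exists_cons_of_ne_nil hUne
    rw [hUc, List.cons_append] at h
    injection h with h1 h2
    exact floor_cons_ne a (U' ++ FreeMonoid.toList v) h1
  have ne3_9 : (OpMonoid.flr (u * (v * OpMonoid.flr w))) ≠ (OpMonoid.flr (u * v) * OpMonoid.flr w) := by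
    refine op_ne_of_list ?_
    simp only [toList_mul', toList_flr, List.cons_append, List.nil_append,
      List.append_assoc]
    intro h
    simp at h
  have ne3_10 : (u * OpMonoid.flr (OpMonoid.flr v * w)) ≠ (OpMonoid.flr (u * v) * OpMonoid.flr w) := by
    refine op_ne_of_list ?_
    simp only [toList_mul', toList_flr, List.cons_append, List.nil_append,
      List.append_assoc]
    intro h
    replace h := h.symm
    obtain ⟨a, U', hUc⟩ := List.exists_cons_of_ne_nil hUne
    rw [hUc, List.cons_append] at h
    injection h with h1 h2
    exact floor_cons_ne a (U' ++ FreeMonoid.toList v) h1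
  have ne3_12 : (u * OpMonoid.flr (OpMonoid.flr (v * w))) ≠ (OpMonoid.flr (u * v) * OpMonoid.flr w) := by
    refine op_ne_of_list ?_
    simp only [toList_mul', toList_flr, List.cons_append, List.nil_append,
      List.append_assoc]
    intro h
    replace h := h.symm
    obtain ⟨a, U', hUc⟩ := List.exists_cons_of_ne_nil hUne
    rw [hUc, List.cons_append] at h
    injection h with h1 h2
    exact floor_cons_ne a (U' ++ FreeMonoid.toList v) h1
  have ne3_15 : (OpMonoid.flr (OpMonoid.flr (u * (v * w)))) ≠ (OpMonoid.flr (u * v) * OpMonoid.flr w) := by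
    refine op_ne_of_list ?_
    simp only [toList_mul', toList_flr, List.cons_append, List.nil_append,
      List.append_assoc]
    intro h
    simp at h
  have ne4_8 : (u * OpMonoid.flr (v * OpMonoid.flr w)) ≠ (u * (OpMonoid.flr v * OpMonoid.flr w)) := by
    refine op_ne_of_list ?_
    simp only [toList_mul', toList_flr, List.cons_append, List.nil_append,
      List.append_assoc]
    intro h
    replace h := List.append_cancel_left h.symm
    injection h with h1 h2
    exact List.cons_ne_nil _ _ h2
  have ne4_10 : (u * OpMonoid.flr (OpMonoid.flr v * w)) ≠ (u * (OpMonoid.flr v * OpMonoid.flr w)) := by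
    refine op_ne_of_list ?_
    simp only [toList_mul', toList_flr, List.cons_append, List.nil_append,
      List.append_assoc]
    intro h
    replace h := List.append_cancel_left h.symm
    injection h with h1 h2
    exact List.cons_ne_nil _ _ h2
  have ne4_12 : (u * OpMonoid.flr (OpMonoid.flr (v * w))) ≠ (u * (OpMonoid.flr v * OpMonoid.flr w)) := by
    refine op_ne_of_list ?_
    simp only [toList_mul', toList_flr, List.cons_append, List.nil_append,
      List.append_assoc]
    intro h
    replace h := List.append_cancel_left h.symm
    injection h with h1 h2
    exact List.cons_ne_nil _ _ h2
  have hval1 : ((MonoidAlgebra.single (u * (OpMonoid.flr v * OpMonoid.flr w)) (1 : k)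
        + MonoidAlgebra.single (OpMonoid.flr (u * OpMonoid.flr v) * w) (1 : k)
        + MonoidAlgebra.single (OpMonoid.flr (OpMonoid.flr u * v) * w) (1 : k)
        - MonoidAlgebra.single (OpMonoid.flr (OpMonoid.flr u * (v * w))) (1 : k)
        - MonoidAlgebra.single (OpMonoid.flr (u * v) * OpMonoid.flr w) (1 : k)
        - MonoidAlgebra.single (OpMonoid.flr (OpMonoid.flr (u * v)) * w) (1 : k)
        + MonoidAlgebra.single (OpMonoid.flr (OpMonoid.flr (u * v) * w)) (1 : k)
        - MonoidAlgebra.single (u * OpMonoid.flr (v * OpMonoid.flr w)) (1 : k)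
        + MonoidAlgebra.single (OpMonoid.flr (u * (v * OpMonoid.flr w))) (1 : k)
        - MonoidAlgebra.single (u * OpMonoid.flr (OpMonoid.flr v * w)) (1 : k)
        - MonoidAlgebra.single (OpMonoid.flr u * (OpMonoid.flr v * w)) (1 : k)
        + MonoidAlgebra.single (u * OpMonoid.flr (OpMonoid.flr (v * w))) (1 : k)
        + MonoidAlgebra.single (OpMonoid.flr u * OpMonoid.flr (v * w)) (1 : k)
        - MonoidAlgebra.single (OpMonoid.flr (u * OpMonoid.flr (v * w))) (1 : k)) : kOpM k Z).coeff (OpMonoid.flr u * OpMonoid.flr (v * w)) = 1 := by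
    simp only [kop_add_apply k, kop_sub_apply k, MonoidAlgebra.coeff_single, Finsupp.single_eq_same,
      Finsupp.single_eq_of_ne' ne1_1,
      Finsupp.single_eq_of_ne' ne1_2,
      Finsupp.single_eq_of_ne' ne1_3,
      Finsupp.single_eq_of_ne' ne1_4,
      Finsupp.single_eq_of_ne' ne1_5,
      Finsupp.single_eq_of_ne' ne1_6,
      Finsupp.single_eq_of_ne' ne1_7,
      Finsupp.single_eq_of_ne' ne1_8,
      Finsupp.single_eq_of_ne' ne1_9,
      Finsupp.single_eq_of_ne' ne1_10,
      Finsupp.single_eq_of_ne' ne1_11,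
      Finsupp.single_eq_of_ne' ne1_12,
      Finsupp.single_eq_of_ne' ne1_14]
    norm_num
  have hval2 : ((MonoidAlgebra.single (u * (OpMonoid.flr v * OpMonoid.flr w)) (1 : k)
        + MonoidAlgebra.single (OpMonoid.flr (u * OpMonoid.flr v) * w) (1 : k)
        + MonoidAlgebra.single (OpMonoid.flr (OpMonoid.flr u * v) * w) (1 : k)
        - MonoidAlgebra.single (OpMonoid.flr (u * v) * OpMonoid.flr w) (1 : k)
        - MonoidAlgebra.single (OpMonoid.flr (OpMonoid.flr (u * v)) * w) (1 : k)
        + MonoidAlgebra.single (OpMonoid.flr (OpMonoid.flr (u * v) * w)) (1 : k)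
        - MonoidAlgebra.single (u * OpMonoid.flr (v * OpMonoid.flr w)) (1 : k)
        + MonoidAlgebra.single (OpMonoid.flr (u * (v * OpMonoid.flr w))) (1 : k)
        - MonoidAlgebra.single (u * OpMonoid.flr (OpMonoid.flr v * w)) (1 : k)
        - MonoidAlgebra.single (OpMonoid.flr u * (OpMonoid.flr v * w)) (1 : k)
        + MonoidAlgebra.single (u * OpMonoid.flr (OpMonoid.flr (v * w))) (1 : k)
        - MonoidAlgebra.single (OpMonoid.flr (OpMonoid.flr (u * (v * w)))) (1 : k)) : kOpM k Z).coeff (OpMonoid.flr u * (OpMonoid.flr v * w)) = -1 := by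
    simp only [kop_add_apply k, kop_sub_apply k, MonoidAlgebra.coeff_single, Finsupp.single_eq_same,
      Finsupp.single_eq_of_ne' ne2_1,
      Finsupp.single_eq_of_ne' ne2_2,
      Finsupp.single_eq_of_ne' ne2_3,
      Finsupp.single_eq_of_ne' ne2_5,
      Finsupp.single_eq_of_ne' ne2_6,
      Finsupp.single_eq_of_ne' ne2_7,
      Finsupp.single_eq_of_ne' ne2_8,
      Finsupp.single_eq_of_ne' ne2_9,
      Finsupp.single_eq_of_ne' ne2_10,
      Finsupp.single_eq_of_ne' ne2_12,
      Finsupp.single_eq_of_ne' ne2_15]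
    norm_num
  have hval3 : ((MonoidAlgebra.single (u * (OpMonoid.flr v * OpMonoid.flr w)) (1 : k)
        - MonoidAlgebra.single (OpMonoid.flr (u * v) * OpMonoid.flr w) (1 : k)
        + MonoidAlgebra.single (OpMonoid.flr (OpMonoid.flr (u * v) * w)) (1 : k)
        - MonoidAlgebra.single (u * OpMonoid.flr (v * OpMonoid.flr w)) (1 : k)
        + MonoidAlgebra.single (OpMonoid.flr (u * (v * OpMonoid.flr w))) (1 : k)
        - MonoidAlgebra.single (u * OpMonoid.flr (OpMonoid.flr v * w)) (1 : k)
        + MonoidAlgebra.single (u * OpMonoid.flr (OpMonoid.flr (v * w))) (1 : k)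
        - MonoidAlgebra.single (OpMonoid.flr (OpMonoid.flr (u * (v * w)))) (1 : k)) : kOpM k Z).coeff (OpMonoid.flr (u * v) * OpMonoid.flr w) = -1 := by
    simp only [kop_add_apply k, kop_sub_apply k, MonoidAlgebra.coeff_single, Finsupp.single_eq_same,
      Finsupp.single_eq_of_ne' ne3_1,
      Finsupp.single_eq_of_ne' ne3_7,
      Finsupp.single_eq_of_ne' ne3_8,
      Finsupp.single_eq_of_ne' ne3_9,
      Finsupp.single_eq_of_ne' ne3_10,
      Finsupp.single_eq_of_ne' ne3_12,
      Finsupp.single_eq_of_ne' ne3_15]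
    norm_num
  have hval4 : ((MonoidAlgebra.single (u * (OpMonoid.flr v * OpMonoid.flr w)) (1 : k)
        - MonoidAlgebra.single (u * OpMonoid.flr (v * OpMonoid.flr w)) (1 : k)
        - MonoidAlgebra.single (u * OpMonoid.flr (OpMonoid.flr v * w)) (1 : k)
        + MonoidAlgebra.single (u * OpMonoid.flr (OpMonoid.flr (v * w))) (1 : k)) : kOpM k Z).coeff (u * (OpMonoid.flr v * OpMonoid.flr w)) = 1 := by
    simp only [kop_add_apply k, kop_sub_apply k, MonoidAlgebra.coeff_single, Finsupp.single_eq_same,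
      Finsupp.single_eq_of_ne' ne4_8,
      Finsupp.single_eq_of_ne' ne4_10,
      Finsupp.single_eq_of_ne' ne4_12]
    norm_num
  have hq1 : ((OpCtx.hole 1 1) : OpCtx Z).subst (OpMonoid.flr (u) * OpMonoid.flr (v * w)) = OpMonoid.flr u * OpMonoid.flr (v * w) := by
    simp [OpCtx.subst, one_mul, mul_one, mul_assoc]
  have step1 : nijStep k ((MonoidAlgebra.single (u * (OpMonoid.flr v * OpMonoid.flr w)) (1 : k)
        + MonoidAlgebra.single (OpMonoid.flr (u * OpMonoid.flr v) * w) (1 : k)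
        + MonoidAlgebra.single (OpMonoid.flr (OpMonoid.flr u * v) * w) (1 : k)
        - MonoidAlgebra.single (OpMonoid.flr (OpMonoid.flr u * (v * w))) (1 : k)
        - MonoidAlgebra.single (OpMonoid.flr (u * v) * OpMonoid.flr w) (1 : k)
        - MonoidAlgebra.single (OpMonoid.flr (OpMonoid.flr (u * v)) * w) (1 : k)
        + MonoidAlgebra.single (OpMonoid.flr (OpMonoid.flr (u * v) * w)) (1 : k)
        - MonoidAlgebra.single (u * OpMonoid.flr (v * OpMonoid.flr w)) (1 : k)
        + MonoidAlgebra.single (OpMonoid.flr (u * (v * OpMonoid.flr w))) (1 : k)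
        - MonoidAlgebra.single (u * OpMonoid.flr (OpMonoid.flr v * w)) (1 : k)
        - MonoidAlgebra.single (OpMonoid.flr u * (OpMonoid.flr v * w)) (1 : k)
        + MonoidAlgebra.single (u * OpMonoid.flr (OpMonoid.flr (v * w))) (1 : k)
        + MonoidAlgebra.single (OpMonoid.flr u * OpMonoid.flr (v * w)) (1 : k)
        - MonoidAlgebra.single (OpMonoid.flr (u * OpMonoid.flr (v * w))) (1 : k))) ((MonoidAlgebra.single (u * (OpMonoid.flr v * OpMonoid.flr w)) (1 : k)
        + MonoidAlgebra.single (OpMonoid.flr (u * OpMonoid.flr v) * w) (1 : k)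
        + MonoidAlgebra.single (OpMonoid.flr (OpMonoid.flr u * v) * w) (1 : k)
        - MonoidAlgebra.single (OpMonoid.flr (u * v) * OpMonoid.flr w) (1 : k)
        - MonoidAlgebra.single (OpMonoid.flr (OpMonoid.flr (u * v)) * w) (1 : k)
        + MonoidAlgebra.single (OpMonoid.flr (OpMonoid.flr (u * v) * w)) (1 : k)
        - MonoidAlgebra.single (u * OpMonoid.flr (v * OpMonoid.flr w)) (1 : k)
        + MonoidAlgebra.single (OpMonoid.flr (u * (v * OpMonoid.flr w))) (1 : k)
        - MonoidAlgebra.single (u * OpMonoid.flr (OpMonoid.flr v * w)) (1 : k)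
        - MonoidAlgebra.single (OpMonoid.flr u * (OpMonoid.flr v * w)) (1 : k)
        + MonoidAlgebra.single (u * OpMonoid.flr (OpMonoid.flr (v * w))) (1 : k)
        - MonoidAlgebra.single (OpMonoid.flr (OpMonoid.flr (u * (v * w)))) (1 : k))) := by
    unfold nijStep
    refine ⟨u, v * w, OpCtx.hole 1 1, ?_, ?_⟩
    · rw [hq1, hval1]
      norm_num
    · rw [hq1, hval1, ctx_opP_nijB]
      simp only [OpCtx.subst, one_mul, mul_one, mul_assoc, Finsupp.single_neg]
      module
  have hq2 : ((OpCtx.hole 1 w) : OpCtx Z).subst (OpMonoid.flr (u) * OpMonoid.flr (v)) = OpMonoid.flr u * (OpMonoid.flr v * w) := by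
    simp [OpCtx.subst, one_mul, mul_one, mul_assoc]
  have step2 : nijStep k ((MonoidAlgebra.single (u * (OpMonoid.flr v * OpMonoid.flr w)) (1 : k)
        + MonoidAlgebra.single (OpMonoid.flr (u * OpMonoid.flr v) * w) (1 : k)
        + MonoidAlgebra.single (OpMonoid.flr (OpMonoid.flr u * v) * w) (1 : k)
        - MonoidAlgebra.single (OpMonoid.flr (u * v) * OpMonoid.flr w) (1 : k)
        - MonoidAlgebra.single (OpMonoid.flr (OpMonoid.flr (u * v)) * w) (1 : k)
        + MonoidAlgebra.single (OpMonoid.flr (OpMonoid.flr (u * v) * w)) (1 : k)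
        - MonoidAlgebra.single (u * OpMonoid.flr (v * OpMonoid.flr w)) (1 : k)
        + MonoidAlgebra.single (OpMonoid.flr (u * (v * OpMonoid.flr w))) (1 : k)
        - MonoidAlgebra.single (u * OpMonoid.flr (OpMonoid.flr v * w)) (1 : k)
        - MonoidAlgebra.single (OpMonoid.flr u * (OpMonoid.flr v * w)) (1 : k)
        + MonoidAlgebra.single (u * OpMonoid.flr (OpMonoid.flr (v * w))) (1 : k)
        - MonoidAlgebra.single (OpMonoid.flr (OpMonoid.flr (u * (v * w)))) (1 : k))) ((MonoidAlgebra.single (u * (OpMonoid.flr v * OpMonoid.flr w)) (1 : k)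
        - MonoidAlgebra.single (OpMonoid.flr (u * v) * OpMonoid.flr w) (1 : k)
        + MonoidAlgebra.single (OpMonoid.flr (OpMonoid.flr (u * v) * w)) (1 : k)
        - MonoidAlgebra.single (u * OpMonoid.flr (v * OpMonoid.flr w)) (1 : k)
        + MonoidAlgebra.single (OpMonoid.flr (u * (v * OpMonoid.flr w))) (1 : k)
        - MonoidAlgebra.single (u * OpMonoid.flr (OpMonoid.flr v * w)) (1 : k)
        + MonoidAlgebra.single (u * OpMonoid.flr (OpMonoid.flr (v * w))) (1 : k)
        - MonoidAlgebra.single (OpMonoid.flr (OpMonoid.flr (u * (v * w)))) (1 : k))) := by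
    unfold nijStep
    refine ⟨u, v, OpCtx.hole 1 w, ?_, ?_⟩
    · rw [hq2, hval2]
      norm_num
    · rw [hq2, hval2, ctx_opP_nijB]
      simp only [OpCtx.subst, one_mul, mul_one, mul_assoc, MonoidAlgebra.single_neg]
      module
  have hq3 : ((OpCtx.hole 1 1) : OpCtx Z).subst (OpMonoid.flr (u * v) * OpMonoid.flr (w)) = OpMonoid.flr (u * v) * OpMonoid.flr w := by
    simp [OpCtx.subst, one_mul, mul_one, mul_assoc]
  have step3 : nijStep k ((MonoidAlgebra.single (u * (OpMonoid.flr v * OpMonoid.flr w)) (1 : k)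
        - MonoidAlgebra.single (OpMonoid.flr (u * v) * OpMonoid.flr w) (1 : k)
        + MonoidAlgebra.single (OpMonoid.flr (OpMonoid.flr (u * v) * w)) (1 : k)
        - MonoidAlgebra.single (u * OpMonoid.flr (v * OpMonoid.flr w)) (1 : k)
        + MonoidAlgebra.single (OpMonoid.flr (u * (v * OpMonoid.flr w))) (1 : k)
        - MonoidAlgebra.single (u * OpMonoid.flr (OpMonoid.flr v * w)) (1 : k)
        + MonoidAlgebra.single (u * OpMonoid.flr (OpMonoid.flr (v * w))) (1 : k)
        - MonoidAlgebra.single (OpMonoid.flr (OpMonoid.flr (u * (v * w)))) (1 : k))) ((MonoidAlgebra.single (u * (OpMonoid.flr v * OpMonoid.flr w)) (1 : k)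
        - MonoidAlgebra.single (u * OpMonoid.flr (v * OpMonoid.flr w)) (1 : k)
        - MonoidAlgebra.single (u * OpMonoid.flr (OpMonoid.flr v * w)) (1 : k)
        + MonoidAlgebra.single (u * OpMonoid.flr (OpMonoid.flr (v * w))) (1 : k))) := by
    unfold nijStep
    refine ⟨u * v, w, OpCtx.hole 1 1, ?_, ?_⟩
    · rw [hq3, hval3]
      norm_num
    · rw [hq3, hval3, ctx_opP_nijB]
      simp only [OpCtx.subst, one_mul, mul_one, mul_assoc, MonoidAlgebra.single_neg]
      module
  have hq4 : ((OpCtx.hole u 1) : OpCtx Z).subst (OpMonoid.flr (v) * OpMonoid.flr (w)) = u * (OpMonoid.flr v * OpMonoid.flr w) := by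
    simp [OpCtx.subst, one_mul, mul_one, mul_assoc]
  have step4 : nijStep k ((MonoidAlgebra.single (u * (OpMonoid.flr v * OpMonoid.flr w)) (1 : k)
        - MonoidAlgebra.single (u * OpMonoid.flr (v * OpMonoid.flr w)) (1 : k)
        - MonoidAlgebra.single (u * OpMonoid.flr (OpMonoid.flr v * w)) (1 : k)
        + MonoidAlgebra.single (u * OpMonoid.flr (OpMonoid.flr (v * w))) (1 : k))) ((0 : kOpM k Z)) := by
    unfold nijStep
    refine ⟨v, w, OpCtx.hole u 1, ?_, ?_⟩
    · rw [hq4, hval4]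
      norm_num
    · rw [hq4, hval4, ctx_opP_nijB]
      simp only [OpCtx.subst, one_mul, mul_one, mul_assoc, Finsupp.single_neg]
      module
  rw [nijB_assoc_expand]
  exact Relation.ReflTransGen.head step1 (Relation.ReflTransGen.head step2
    (Relation.ReflTransGen.head step3 (Relation.ReflTransGen.head step4
      Relation.ReflTransGen.refl)))
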